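/- arXiv:2507.21445 — 3 statements merged into one kernel-verified Lean document; each statement's English description precedes it below -/
import Mathlib

section
/- Let G = (V, E, A) be a mixed acyclic graph and let C ⊆ V be a clique of the underlying graph of G. Then no vertex of C is incident to two or more edges of E having both endpoints in C; equivalently, the set of edges of E with both endpoints in C forms a matching. -/
/-- A mixed graph `G = (V, E, A)`: a simple graph `E` of undirected edges together
with a set `A` of arcs (ordered pairs of distinct vertices). -/
structure MixedGraph (V : Type*) where
  E : SimpleGraph V
  A : V → V → Prop
  A_irrefl : ∀ v : V, ¬ A v v

namespace MixedGraph

variable {V : Type*}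

/-- The underlying simple graph of a mixed graph. -/
def underlying (G : MixedGraph V) : SimpleGraph V where
  Adj u v := G.E.Adj u v ∨ G.A u v ∨ G.A v u
  symm := by
    constructor
    intro u v h
    rcases h with h | h | h
    · exact Or.inl h.symm
    · exact Or.inr (Or.inr h)
    · exact Or.inr (Or.inl h)
  loopless := by
    constructor
    intro v h
    rcases h with h | h | h
    · exact G.E.loopless.irrefl v h
    · exact G.A_irrefl v h
    · exact G.A_irrefl v h

/-- `G` contains a mixed cycle: a cyclic sequence of `p ≥ 2` pairwise distinct
vertices in which each consecutive pair (cyclically) is an undirected edge of `E`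
or an arc of `A`, and no edge of `E` is used by two different consecutive pairs.
(`useE i = true` means the `i`-th consecutive pair uses an edge of `E`.) -/
def HasMixedCycle (G : MixedGraph V) : Prop :=
  ∃ (p : ℕ) (c : Fin (p + 2) → V) (useE : Fin (p + 2) → Bool),
    Function.Injective c ∧
    (∀ i : Fin (p + 2),
      (useE i = true → G.E.Adj (c i) (c (i + 1))) ∧
      (useE i = false → G.A (c i) (c (i + 1)))) ∧
    (∀ i j : Fin (p + 2), i ≠ j → useE i = true → useE j = true →
      s(c i, c (i + 1)) ≠ s(c j, c (j + 1)))

/-- A mixed graph is mixed acyclic if it has no mixed cycle. -/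
def MixedAcyclic (G : MixedGraph V) : Prop := ¬ G.HasMixedCycle

/-- An orientation of the undirected edges of a mixed graph: each edge
`{u,v} ∈ E` is assigned exactly one of the two directions `(u,v)`, `(v,u)`. -/
structure Orientation (G : MixedGraph V) where
  dir : V → V → Prop
  dir_adj : ∀ u v : V, dir u v → G.E.Adj u v
  total : ∀ u v : V, G.E.Adj u v → dir u v ∨ dir v u
  antisymm : ∀ u v : V, dir u v → ¬ dir v u

/-- The arc relation of the digraph `G_λ`: the original arcs together with the
chosen orientations of the undirected edges. -/
def Orientation.arc {G : MixedGraph V} (lam : Orientation G) (u v : V) : Prop :=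
  G.A u v ∨ lam.dir u v

/-- The orientation `lam` satisfies the set `T` of terminal pairs if `G_λ`
contains a directed path from `s` to `t` for every `(s, t) ∈ T`. -/
def Orientation.Satisfies {G : MixedGraph V} (lam : Orientation G)
    (T : Set (V × V)) : Prop :=
  ∀ p ∈ T, Relation.ReflTransGen lam.arc p.1 p.2

/-- `(G, T)` is a yes-instance of Steiner Orientation: some orientation of the
undirected edges satisfies all terminal pairs. -/
def YesInstance (G : MixedGraph V) (T : Set (V × V)) : Prop :=
  ∃ lam : Orientation G, lam.Satisfies T

/-- The number of arcs of `G` having `v` as head or as tail. -/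
noncomputable def degA (G : MixedGraph V) (v : V) : ℕ :=
  {p : V × V | G.A p.1 p.2 ∧ (p.1 = v ∨ p.2 = v)}.ncard

end MixedGraph


lemma triangle_cycle {V : Type*} (G : MixedGraph V) {u w₁ w₂ : V}
    (h1 : G.E.Adj u w₁) (h2 : G.E.Adj u w₂) (hne : w₁ ≠ w₂)
    (b : Bool) (hbt : b = true → G.E.Adj w₁ w₂) (hbf : b = false → G.A w₁ w₂) :
    G.HasMixedCycle := by
  have hu1 : u ≠ w₁ := h1.ne
  have hu2 : u ≠ w₂ := h2.ne
  refine ⟨1, ![u, w₁, w₂], ![true, b, true], ?_, ?_, ?_⟩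
  · intro i j hij
    fin_cases i <;> fin_cases j <;>
      simp_all [hu1, hu2, hne, hu1.symm, hu2.symm, hne.symm]
  · intro i
    fin_cases i <;>
      refine ⟨fun h => ?_, fun h => ?_⟩ <;>
      simp_all <;> first
        | exact h1
        | exact hbt h
        | exact hbf h
        | exact h2.symm
  · intro i j hij hi hj
    fin_cases i <;> fin_cases j <;>
      simp_all (config := {decide := true}) [Sym2.eq_iff] <;>
      tauto

/-- If `G` is mixed acyclic and `C` is a clique of the underlying
graph, then no vertex of `C` is incident to two or more edges of `E` with both
endpoints in `C`; i.e. the edges of `E` inside `C` form a matching. -/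
theorem steinerOrientation_stmt5 {V : Type*} [Fintype V] (G : MixedGraph V)
    (hG : G.MixedAcyclic) (C : Set V) (hC : G.underlying.IsClique C) :
    ∀ u ∈ C, ∀ w₁ ∈ C, ∀ w₂ ∈ C,
      G.E.Adj u w₁ → G.E.Adj u w₂ → w₁ = w₂ := by
  intro u hu w₁ hw₁ w₂ hw₂ h1 h2
  by_contra hne
  have hadj : G.underlying.Adj w₁ w₂ := hC hw₁ hw₂ hne
  rcases hadj with hE | hA | hA
  · exact hG (triangle_cycle G h1 h2 hne true (fun _ => hE) (by simp))
  · exact hG (triangle_cycle G h1 h2 hne false (by simp) (fun _ => hA))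
  · exact hG (triangle_cycle G h2 h1 (Ne.symm hne) false (by simp) (fun _ => hA))
end

section
/- Let G = (V, E, A) be a mixed acyclic graph, let S ⊆ V be such that the underlying graph of the induced mixed subgraph on V ∖ S is a complete graph, and assume every edge of E has both endpoints in V ∖ S. Let D be the digraph on V whose arcs are A together with both orientations (u,v) and (v,u) of every edge {u,v} ∈ E. Let s, t ∈ V be such that D contains a directed path from s to t but the digraph (V, A) contains no directed path from s to t. Then there exists a single edge e ∈ E such that every directed path from s to t in D traverses exactly one edge of E (in one of its two orientations), and that edge is e. -/
namespace StOr
open List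
variable {V : Type*}

lemma nodup_filterMap_inj {α β : Type*} :
    ∀ {l : List α} {f : α → Option β}, l.Nodup → (l.filterMap f).Nodup →
    ∀ {a b : α} {e : β}, a ∈ l → b ∈ l → f a = some e → f b = some e → a = b := by
  intro l
  induction l with
  | nil => intro f _ _ a b e ha; exact absurd ha List.not_mem_nil
  | cons x xs ih =>
    intro f hnd hfm a b e ha hb fa fb
    have hndx := (List.nodup_cons.1 hnd)
    rcases hfx : f x with _ | v
    · have hfm' : (xs.filterMap f).Nodup := by
        rwa [List.filterMap_cons, hfx] at hfm
      rcases List.mem_cons.1 ha with rfl | ha'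
      · rw [hfx] at fa; exact absurd fa (by simp)
      rcases List.mem_cons.1 hb with rfl | hb'
      · rw [hfx] at fb; exact absurd fb (by simp)
      exact ih hndx.2 hfm' ha' hb' fa fb
    · rw [List.filterMap_cons, hfx] at hfm
      have hv : v ∉ xs.filterMap f := (List.nodup_cons.1 hfm).1
      have hfm' := (List.nodup_cons.1 hfm).2
      rcases List.mem_cons.1 ha with rfl | ha' <;> rcases List.mem_cons.1 hb with rfl | hb'
      · rfl
      · exfalso
        rw [hfx] at fa
        obtain rfl : v = e := by simpa using fa
        exact hv (List.mem_filterMap.2 ⟨b, hb', fb⟩)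
      · exfalso
        rw [hfx] at fb
        obtain rfl : v = e := by simpa using fb
        exact hv (List.mem_filterMap.2 ⟨a, ha', fa⟩)
      · exact ih hndx.2 hfm' ha' hb' fa fb

lemma exists_dup_map {α β : Type*} (f : α → β) :
    ∀ {l : List α}, ¬ (l.map f).Nodup →
    ∃ A p B q C, l = A ++ p :: B ++ q :: C ∧ f p = f q := by
  intro l
  induction l with
  | nil => intro h; exact absurd List.nodup_nil h
  | cons x xs ih =>
    intro h
    rw [List.map_cons, List.nodup_cons] at h
    push_neg at h
    by_cases hx : f x ∈ xs.map f
    · obtain ⟨q, hq, hfq⟩ := List.mem_map.1 hx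
      obtain ⟨B, C, rfl⟩ := List.append_of_mem hq
      exact ⟨[], x, B, q, C, by simp, hfq.symm⟩
    · obtain ⟨A, p, B, q, C, rfl, hpq⟩ := ih (h hx)
      exact ⟨x :: A, p, B, q, C, by simp, hpq⟩

variable (G : MixedGraph V)

def nextV : List (V × Bool) → V → V
  | [], z => z
  | p :: _, _ => p.1

def okW : List (V × Bool) → V → Prop
  | [], _ => True
  | p :: W, z => ((p.2 = true → G.E.Adj p.1 (nextV W z)) ∧
      (p.2 = false → G.A p.1 (nextV W z))) ∧ okW W z

def edW : List (V × Bool) → V → List (Sym2 V)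
  | [], _ => []
  | p :: W, z => (if p.2 = true then [s(p.1, nextV W z)] else []) ++ edW W z


lemma nextV_append (A B : List (V × Bool)) (z : V) :
    nextV (A ++ B) z = nextV A (nextV B z) := by
  cases A <;> rfl

lemma okW_append {A B : List (V × Bool)} {z : V} :
    okW G (A ++ B) z ↔ okW G A (nextV B z) ∧ okW G B z := by
  induction A with
  | nil => simp [okW]
  | cons p A ih =>
    show okW G (p :: (A ++ B)) z ↔ _
    simp only [okW]
    rw [nextV_append, ih]
    tauto

lemma edW_append (A B : List (V × Bool)) (z : V) :
    edW (A ++ B) z = edW A (nextV B z) ++ edW B z := by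
  induction A with
  | nil => simp [edW]
  | cons p A ih =>
    show edW (p :: (A ++ B)) z = _
    simp only [edW]
    rw [nextV_append, ih, List.append_assoc]

def nthV (W : List (V × Bool)) (z : V) (k : ℕ) : V :=
  match W[k+1]? with
  | some q => q.1
  | none => z

def fE (W : List (V × Bool)) (z : V) (k : ℕ) : Option (Sym2 V) :=
  match W[k]? with
  | some p => if p.2 = true then some (s(p.1, nthV W z k)) else none
  | none => none

lemma nthV_zero (p : V × Bool) (W : List (V × Bool)) (z : V) :
    nthV (p :: W) z 0 = nextV W z := by
  cases W with
  | nil => rfl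
  | cons q W =>
    simp [nthV, nextV, List.getElem?_cons_succ, List.getElem?_cons_zero]

lemma nthV_succ (p : V × Bool) (W : List (V × Bool)) (z : V) (k : ℕ) :
    nthV (p :: W) z (k+1) = nthV W z k := by
  simp only [nthV, List.getElem?_cons_succ]

lemma fE_succ (p : V × Bool) (W : List (V × Bool)) (z : V) (k : ℕ) :
    fE (p :: W) z (k+1) = fE W z k := by
  simp only [fE, List.getElem?_cons_succ, nthV_succ]

lemma okW_get {W : List (V × Bool)} {z : V} (h : okW G W z) :
    ∀ (k : ℕ) (hk : k < W.length),
      ((W[k].2 = true → G.E.Adj W[k].1 (nthV W z k)) ∧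
       (W[k].2 = false → G.A W[k].1 (nthV W z k))) := by
  induction W with
  | nil => intro k hk; simp at hk
  | cons p W ih =>
    intro k hk
    cases k with
    | zero => simpa [nthV_zero] using h.1
    | succ k =>
      have := ih h.2 k (by simpa using hk)
      simpa [nthV_succ] using this

lemma edW_eq (W : List (V × Bool)) (z : V) :
    edW W z = (List.range W.length).filterMap (fE W z) := by
  induction W with
  | nil => simp [edW]
  | cons p W ih =>
    have hcomp : fE (p :: W) z ∘ Nat.succ = fE W z := by
      funext k; exact fE_succ p W z k
    have h0 : fE (p :: W) z 0 =
        if p.2 = true then some (s(p.1, nextV W z)) else none := by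
      simp only [fE, List.getElem?_cons_zero, nthV_zero]
    simp only [edW, ih]
    rw [List.length_cons, List.range_succ_eq_map, List.filterMap_cons,
      List.filterMap_map, hcomp]
    rcases hb : p.2 with _ | _
    · simp [h0, hb]
    · simp [h0, hb]

lemma no_closed (hG : G.MixedAcyclic) :
    ∀ (n : ℕ) (W : List (V × Bool)) (z : V), W.length ≤ n →
      W.head?.map Prod.fst = some z → okW G W z → (edW W z).Nodup → False := by
  intro n
  induction n with
  | zero =>
    intro W z hlen hhead
    cases W
    · simp at hhead
    · simp at hlen
  | succ n ih =>
    intro W z hlen hhead hok hnd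
    by_cases hvert : (W.map Prod.fst).Nodup
    · -- vertices distinct: W is a genuine mixed cycle (or degenerate loop)
      cases W with
      | nil => simp at hhead
      | cons p W' =>
        obtain rfl : p.1 = z := by simpa using hhead
        cases W' with
        | nil =>
          rcases hb : p.2 with _ | _
          · exact G.A_irrefl p.1 ((hok.1.2 hb))
          · exact G.E.loopless.irrefl p.1 ((hok.1.1 hb))
        | cons q W'' =>
          apply hG
          set L : List (V × Bool) := p :: q :: W'' with hL
          set m := W''.length with hm
          have hlen2 : L.length = m + 2 := by simp [hL, hm]
          have hvalid : ∀ i : Fin (m + 2), (i : ℕ) < L.length := by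
            intro i; rw [hlen2]; exact i.isLt
          set c : Fin (m + 2) → V := fun i => (L.get ⟨i, hvalid i⟩).1 with hc
          set u : Fin (m + 2) → Bool := fun i => (L.get ⟨i, hvalid i⟩).2 with hu
          have hc1 : ∀ i : Fin (m + 2), c (i + 1) = nthV L p.1 i := by
            intro i
            by_cases hi : (i : ℕ) + 1 < m + 2
            · have hival : ((i + 1 : Fin (m + 2)) : ℕ) = (i : ℕ) + 1 := by
                rw [Fin.val_add_one]
                have : i ≠ Fin.last (m + 1) := by
                  intro h; rw [h] at hi; simp at hi
                simp [this]
              have hlt : (i : ℕ) + 1 < L.length := by rw [hlen2]; exact hi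
              have : nthV L p.1 i = (L[(i : ℕ) + 1]'hlt).1 := by
                simp only [nthV, List.getElem?_eq_getElem hlt]
              rw [this, hc]
              simp only [List.get_eq_getElem, hival]
            · have hival : ((i + 1 : Fin (m + 2)) : ℕ) = 0 := by
                have : (i : ℕ) = m + 1 := by omega
                rw [Fin.val_add_one]
                have : i = Fin.last (m + 1) := by
                  apply Fin.ext; simpa using this
                simp [this]
              have hge : L.length ≤ (i : ℕ) + 1 := by omega
              have : nthV L p.1 i = p.1 := by
                simp only [nthV, List.getElem?_eq_none hge]
              rw [this, hc]
              simp only [List.get_eq_getElem, hival]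
              simp [hL]
          have hfE : ∀ i : Fin (m + 2), u i = true →
              fE L p.1 i = some (s(c i, c (i + 1))) := by
            intro i hui
            have hlt : (i : ℕ) < L.length := hvalid i
            simp only [fE, List.getElem?_eq_getElem hlt]
            have : (L[(i : ℕ)]'hlt).2 = true := hui
            rw [this]
            simp only [if_pos rfl, hc1 i]
            rfl
          refine ⟨m, c, u, ?_, ?_, ?_⟩
          · intro i j hij
            have hmi : (i : ℕ) < (L.map Prod.fst).length := by
              simpa using hvalid i
            have hmj : (j : ℕ) < (L.map Prod.fst).length := by
              simpa using hvalid j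
            have hinj := List.nodup_iff_injective_get.1 hvert
            have h1 : (L.map Prod.fst).get ⟨i, hmi⟩ = c i := by
              simp [hc]
            have h2 : (L.map Prod.fst).get ⟨j, hmj⟩ = c j := by
              simp [hc]
            have := hinj (a₁ := ⟨i, hmi⟩) (a₂ := ⟨j, hmj⟩) (by rw [h1, h2, hij])
            exact Fin.ext (by simpa using congrArg Fin.val this)
          · intro i
            have hlt : (i : ℕ) < L.length := hvalid i
            have := okW_get G hok (i : ℕ) hlt
            rw [← hc1 i] at this
            exact this
          · intro i j hij hui huj heq
            have hfi := hfE i hui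
            have hfj := hfE j huj
            rw [heq] at hfi
            rw [edW_eq] at hnd
            have hmemi : (i : ℕ) ∈ List.range L.length := by
              rw [List.mem_range]; exact hvalid i
            have hmemj : (j : ℕ) ∈ List.range L.length := by
              rw [List.mem_range]; exact hvalid j
            have := nodup_filterMap_inj List.nodup_range hnd hmemi hmemj hfi hfj
            exact hij (Fin.ext this)
    · -- repeated vertex: split off a shorter closed walk
      obtain ⟨A, p, B, q, C, rfl, hpq⟩ := exists_dup_map Prod.fst hvert
      have hassoc : A ++ p :: B ++ q :: C = A ++ ((p :: B) ++ (q :: C)) := by simp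
      rw [hassoc] at hok hnd hlen
      have hok2 := (okW_append G).1 hok
      have hok3 := (okW_append G).1 hok2.2
      have hnq : nextV (q :: C) z = p.1 := by simp [nextV, ← hpq]
      rw [hnq] at hok3
      have hed : edW (A ++ ((p :: B) ++ (q :: C))) z =
          edW A (nextV ((p :: B) ++ (q :: C)) z) ++
            (edW (p :: B) p.1 ++ edW (q :: C) z) := by
        rw [edW_append, edW_append, hnq]
      rw [hed] at hnd
      have hsub : edW (p :: B) p.1 <+ edW A (nextV ((p :: B) ++ (q :: C)) z) ++
          (edW (p :: B) p.1 ++ edW (q :: C) z) :=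
        ((List.sublist_append_left _ _).trans (List.sublist_append_right _ _))
      have hnd2 := hnd.sublist hsub
      apply ih (p :: B) p.1 ?_ (by simp) hok3.1 hnd2
      have := hlen
      simp only [List.length_append, List.length_cons] at this ⊢
      omega

/-- Walks from `x` to `y` using arcs of `A` and edges of `E`, recording the list
of `E`-edges used, in order. -/
inductive WB (G : MixedGraph V) : V → V → List (Sym2 V) → Prop
  | refl (v : V) : WB G v v []
  | arc {a b c : V} {L : List (Sym2 V)} : G.A a b → WB G b c L → WB G a c L
  | edge {a b c : V} {L : List (Sym2 V)} : G.E.Adj a b → WB G b c L →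
      WB G a c (s(a, b) :: L)

lemma WB.rtrans {G : MixedGraph V} {a b c : V} {L : List (Sym2 V)}
    (h : Relation.ReflTransGen G.A a b) (hw : WB G b c L) : WB G a c L := by
  induction h using Relation.ReflTransGen.head_induction_on with
  | refl => exact hw
  | head h' _ ihh => exact WB.arc h' ihh

lemma wb_open {x y : V} {L : List (Sym2 V)} (h : WB G x y L) :
    ∃ W : List (V × Bool), okW G W y ∧ edW W y = L ∧ nextV W y = x := by
  induction h with
  | refl v => exact ⟨[], trivial, rfl, rfl⟩
  | arc hab _ ihw =>
    obtain ⟨W, hok, hed, hnx⟩ := ihw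
    refine ⟨(_, false) :: W, ⟨⟨by simp, fun _ => by rwa [hnx]⟩, hok⟩, ?_, rfl⟩
    simp [edW, hed]
  | edge hab _ ihw =>
    obtain ⟨W, hok, hed, hnx⟩ := ihw
    refine ⟨(_, true) :: W, ⟨⟨fun _ => by rwa [hnx], by simp⟩, hok⟩, ?_, rfl⟩
    simp [edW, hed, hnx]

lemma closed_arc (hG : G.MixedAcyclic) {a b : V} {L : List (Sym2 V)}
    (h : G.A a b) (hw : WB G b a L) (hnd : L.Nodup) : False := by
  obtain ⟨W, hok, hed, hnx⟩ := wb_open G hw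
  apply no_closed G hG ((a, false) :: W).length ((a, false) :: W) a le_rfl (by simp)
  · exact ⟨⟨by simp, fun _ => by rwa [hnx]⟩, hok⟩
  · simpa [edW, hed]

lemma closed_edge (hG : G.MixedAcyclic) {a b : V} {L : List (Sym2 V)}
    (h : G.E.Adj a b) (hw : WB G b a L) (hmem : s(a, b) ∉ L) (hnd : L.Nodup) :
    False := by
  obtain ⟨W, hok, hed, hnx⟩ := wb_open G hw
  apply no_closed G hG ((a, true) :: W).length ((a, true) :: W) a le_rfl (by simp)
  · exact ⟨⟨fun _ => by rwa [hnx], by simp⟩, hok⟩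
  · simp only [edW, hed, hnx]
    simp [hmem, hnd]

def stepR (a b : V) : Prop := G.A a b ∨ G.E.Adj a b

open Classical in
noncomputable def eSeq (l : List V) : List (Sym2 V) :=
  (l.zip l.tail).filterMap
    (fun p => if G.E.Adj p.1 p.2 then some (s(p.1, p.2)) else none)

lemma eSeq_nil : eSeq G ([] : List V) = [] := rfl

lemma eSeq_single (x : V) : eSeq G [x] = [] := rfl

open Classical in
lemma eSeq_cons2 (x y : V) (r : List V) :
    eSeq G (x :: y :: r) =
      (if G.E.Adj x y then [s(x, y)] else []) ++ eSeq G (y :: r) := by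
  classical
  simp only [eSeq, List.zip, List.tail]
  rw [show (x :: y :: r).zipWith Prod.mk (y :: r) =
      (x, y) :: ((y :: r).zipWith Prod.mk r) from rfl]
  rw [List.filterMap_cons]
  by_cases h : G.E.Adj x y
  · rw [if_pos h]; simp [if_pos h]
  · rw [if_neg h]; simp [if_neg h]

lemma mem_getLast? : ∀ {l : List V} {a : V}, l.getLast? = some a → a ∈ l := by
  intro l
  induction l with
  | nil => intro a h; simp at h
  | cons x xs ih =>
    intro a h
    cases xs with
    | nil => simp at h; simp [h]
    | cons y r =>
      rw [List.getLast?_cons_cons] at h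
      exact List.mem_cons_of_mem x (ih h)

open Classical in
lemma eSeq_append : ∀ {P Q : List V} {x y : V}, P.getLast? = some x →
    Q.head? = some y →
    eSeq G (P ++ Q) = eSeq G P ++ (if G.E.Adj x y then [s(x, y)] else []) ++
      eSeq G Q := by
  intro P
  induction P with
  | nil => intro Q x y h; simp at h
  | cons a P' ih =>
    intro Q x y hlast hhead
    cases P' with
    | nil =>
      have hxa : x = a := by simpa using hlast.symm
      cases Q with
      | nil => simp at hhead
      | cons y' Q' =>
        have hyy : y = y' := by simpa using hhead.symm
        rw [hxa, hyy]
        rw [show ([a] ++ y' :: Q') = a :: y' :: Q' from rfl, eSeq_cons2,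
          eSeq_single]
        simp
    | cons b P'' =>
      rw [List.getLast?_cons_cons] at hlast
      rw [show ((a :: b :: P'') ++ Q) = a :: ((b :: P'') ++ Q) from rfl]
      rw [show (a :: ((b :: P'') ++ Q)) = a :: b :: (P'' ++ Q) from rfl]
      rw [eSeq_cons2]
      rw [show (b :: (P'' ++ Q)) = (b :: P'') ++ Q from rfl]
      rw [ih hlast hhead, eSeq_cons2]
      simp [List.append_assoc]

lemma R_of_eSeq_nil : ∀ {l : List V} {a b : V}, l.Chain' (stepR G) →
    l.head? = some a → l.getLast? = some b → eSeq G l = [] →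
    Relation.ReflTransGen G.A a b := by
  intro l
  induction l with
  | nil => intro a b _ h; simp at h
  | cons x xs ih =>
    intro a b hch hhead hlast he
    obtain rfl : x = a := by simpa using hhead
    cases xs with
    | nil =>
      obtain rfl : x = b := by simpa using hlast
      exact Relation.ReflTransGen.refl
    | cons y r =>
      rw [eSeq_cons2] at he
      have hxy : ¬ G.E.Adj x y := by
        intro h; rw [if_pos h] at he; simp at he
      rw [if_neg hxy] at he
      simp only [List.nil_append] at he
      have hch' := List.isChain_cons_cons.1 hch
      have hA : G.A x y := hch'.1.resolve_right hxy
      rw [List.getLast?_cons_cons] at hlast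
      exact Relation.ReflTransGen.head hA (ih hch'.2 rfl hlast he)

open Classical in
lemma D1 : ∀ {l : List V} {a b : V} {f : Sym2 V} {F : List (Sym2 V)},
    l.Chain' (stepR G) → l.head? = some a → l.getLast? = some b →
    eSeq G l = f :: F →
    ∃ x y P Q, l = P ++ Q ∧ P.head? = some a ∧ P.getLast? = some x ∧
      Q.head? = some y ∧ Q.getLast? = some b ∧ Q.Chain' (stepR G) ∧
      G.E.Adj x y ∧ f = s(x, y) ∧ Relation.ReflTransGen G.A a x ∧
      eSeq G P = [] ∧ eSeq G Q = F := by
  intro l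
  induction l with
  | nil => intro a b f F _ h; simp at h
  | cons x xs ih =>
    intro a b f F hch hhead hlast he
    obtain rfl : x = a := by simpa using hhead
    cases xs with
    | nil => rw [eSeq_single] at he; simp at he
    | cons y r =>
      rw [eSeq_cons2] at he
      rw [List.getLast?_cons_cons] at hlast
      have hch' := List.isChain_cons_cons.1 hch
      by_cases hxy : G.E.Adj x y
      · rw [if_pos hxy] at he
        simp only [List.singleton_append, List.cons.injEq] at he
        refine ⟨x, y, [x], y :: r, rfl, rfl, rfl, rfl, hlast, hch'.2, hxy,
          he.1.symm, Relation.ReflTransGen.refl, eSeq_single G x, he.2⟩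
      · rw [if_neg hxy] at he
        simp only [List.nil_append] at he
        have hA : G.A x y := hch'.1.resolve_right hxy
        obtain ⟨x', y', P', Q', heq, hPh, hPl, hQh, hQl, hQch, hE, hf, hR,
          hPe, hQe⟩ := ih hch'.2 rfl hlast he
        have hP'ne : P' ≠ [] := by
          intro h; rw [h] at hPh; simp at hPh
        refine ⟨x', y', x :: P', Q', by rw [heq]; rfl, rfl, ?_, hQh, hQl, hQch,
          hE, hf, Relation.ReflTransGen.head hA hR, ?_, hQe⟩
        · cases P' with
          | nil => exact absurd rfl hP'ne
          | cons c P'' => rw [List.getLast?_cons_cons]; exact hPl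
        · cases P' with
          | nil => exact absurd rfl hP'ne
          | cons c P'' =>
            obtain rfl : y = c := by simpa using hPh.symm
            rw [eSeq_cons2, if_neg hxy, List.nil_append]
            exact hPe

lemma mem_eSeq {l : List V} {f : Sym2 V} (h : f ∈ eSeq G l) :
    ∃ p, p ∈ l.zip l.tail ∧ G.E.Adj p.1 p.2 ∧ s(p.1, p.2) = f := by
  classical
  obtain ⟨p, hp, hif⟩ := List.mem_filterMap.1 h
  by_cases hE : G.E.Adj p.1 p.2
  · rw [if_pos hE] at hif
    exact ⟨p, hp, hE, by simpa using hif⟩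
  · rw [if_neg hE] at hif; simp at hif

lemma eSeq_mem_intro {l : List V} {p : V × V} (hp : p ∈ l.zip l.tail)
    (hE : G.E.Adj p.1 p.2) : s(p.1, p.2) ∈ eSeq G l := by
  classical
  exact List.mem_filterMap.2 ⟨p, hp, by rw [if_pos hE]⟩

lemma eSeq_nodup : ∀ {l : List V}, l.Nodup → (eSeq G l).Nodup := by
  intro l
  induction l with
  | nil => intro _; exact List.nodup_nil
  | cons x xs ih =>
    intro hnd
    cases xs with
    | nil => exact List.nodup_nil
    | cons y r =>
      have hx : x ∉ y :: r := (List.nodup_cons.1 hnd).1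
      have ihn := ih (List.nodup_cons.1 hnd).2
      rw [eSeq_cons2]
      by_cases hxy : G.E.Adj x y
      · rw [if_pos hxy, List.singleton_append, List.nodup_cons]
        refine ⟨?_, ihn⟩
        intro hmem
        obtain ⟨p, hp, hE, hs⟩ := mem_eSeq G hmem
        have hp1 : p.1 ∈ y :: r := (List.of_mem_zip hp).1
        have hp2 : p.2 ∈ (y :: r).tail := (List.of_mem_zip hp).2
        rcases Sym2.eq_iff.1 hs with ⟨h1, h2⟩ | ⟨h1, h2⟩
        · exact hx (h1 ▸ hp1)
        · exact hx (List.mem_cons_of_mem y (h2 ▸ hp2))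
      · rw [if_neg hxy, List.nil_append]; exact ihn

lemma zip_pair_eq {l : List V} (hnd : l.Nodup) {p q : V × V}
    (hp : p ∈ l.zip l.tail) (hq : q ∈ l.zip l.tail)
    (heq : s(p.1, p.2) = s(q.1, q.2)) : p = q := by
  obtain ⟨i, hi, hpi⟩ := List.mem_iff_getElem.1 hp
  obtain ⟨j, hj, hqj⟩ := List.mem_iff_getElem.1 hq
  have hil : i < l.length ∧ i + 1 < l.length := by
    rw [List.length_zip, List.length_tail] at hi; omega
  have hjl : j < l.length ∧ j + 1 < l.length := by
    rw [List.length_zip, List.length_tail] at hj; omega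
  have hpi' : p = (l[i]'hil.1, l[i+1]'hil.2) := by
    rw [← hpi, List.getElem_zip, List.getElem_tail]
  have hqj' : q = (l[j]'hjl.1, l[j+1]'hjl.2) := by
    rw [← hqj, List.getElem_zip, List.getElem_tail]
  rw [hpi', hqj'] at heq ⊢
  simp only at heq
  rcases Sym2.eq_iff.1 heq with ⟨h1, h2⟩ | ⟨h1, h2⟩
  · have : i = j := (hnd.getElem_inj_iff).1 h1
    subst this; rfl
  · have e1 : i = j + 1 := (hnd.getElem_inj_iff).1 h1
    have e2 : i + 1 = j := (hnd.getElem_inj_iff).1 h2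
    omega

lemma sym2_ne {a b c d : V} (h1 : a = c → b = d → False)
    (h2 : a = d → b = c → False) : s(a, b) ≠ s(c, d) := by
  intro h
  rcases Sym2.eq_iff.1 h with ⟨e1, e2⟩ | ⟨e1, e2⟩
  exacts [h1 e1 e2, h2 e1 e2]

lemma tri {S : Set V}
    (hcomp : ∀ a b : V, a ∉ S → b ∉ S → a ≠ b → G.underlying.Adj a b)
    {a b : V} (ha : a ∉ S) (hb : b ∉ S) (hne : a ≠ b) :
    G.E.Adj a b ∨ G.A a b ∨ G.A b a :=
  hcomp a b ha hb hne

lemma not_mem1 {α : Type*} {x a : α} (h : x ≠ a) : x ∉ [a] := by simp [h]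
lemma not_mem2 {α : Type*} {x a b : α} (h1 : x ≠ a) (h2 : x ≠ b) :
    x ∉ [a, b] := by simp [h1, h2]
lemma not_mem3 {α : Type*} {x a b c : α} (h1 : x ≠ a) (h2 : x ≠ b)
    (h3 : x ≠ c) : x ∉ [a, b, c] := by simp [h1, h2, h3]
lemma nodup2 {α : Type*} {a b : α} (h : a ≠ b) : List.Nodup [a, b] := by
  simp [h]
lemma nodup3 {α : Type*} {a b c : α} (hab : a ≠ b) (hac : a ≠ c)
    (hbc : b ≠ c) : List.Nodup [a, b, c] := by simp [hab, hac, hbc]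

lemma one (hG : G.MixedAcyclic) {S : Set V}
    (hcomp : ∀ a b : V, a ∉ S → b ∉ S → a ≠ b → G.underlying.Adj a b)
    (hE : ∀ a b : V, G.E.Adj a b → a ∉ S ∧ b ∉ S)
    {s t x1 y1 x2 y2 : V}
    (hnst : ¬ Relation.ReflTransGen G.A s t)
    (h1 : G.E.Adj x1 y1) (hsx1 : Relation.ReflTransGen G.A s x1)
    (hy1t : Relation.ReflTransGen G.A y1 t)
    (h2 : G.E.Adj x2 y2) (hsx2 : Relation.ReflTransGen G.A s x2)
    (hy2t : Relation.ReflTransGen G.A y2 t) :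
    s(x1, y1) = s(x2, y2) := by
  by_contra hne
  have hnxy : ∀ u v : V, Relation.ReflTransGen G.A s u →
      Relation.ReflTransGen G.A v t → ¬ Relation.ReflTransGen G.A u v := by
    intro u v hu hv hc
    exact hnst (hu.trans (hc.trans hv))
  have hx1y2 : x1 ≠ y2 := by
    intro h; exact hnxy x1 y2 hsx1 hy2t (h ▸ Relation.ReflTransGen.refl)
  have hx2y1 : x2 ≠ y1 := by
    intro h; exact hnxy x2 y1 hsx2 hy1t (h ▸ Relation.ReflTransGen.refl)
  have hA : G.E.Adj x1 y2 ∨ G.A y2 x1 := by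
    rcases tri G hcomp (hE _ _ h1).1 (hE _ _ h2).2 hx1y2 with h | h | h
    · exact Or.inl h
    · exact absurd (Relation.ReflTransGen.single h) (hnxy x1 y2 hsx1 hy2t)
    · exact Or.inr h
  have hB : G.E.Adj x2 y1 ∨ G.A y1 x2 := by
    rcases tri G hcomp (hE _ _ h2).1 (hE _ _ h1).2 hx2y1 with h | h | h
    · exact Or.inl h
    · exact absurd (Relation.ReflTransGen.single h) (hnxy x2 y1 hsx2 hy1t)
    · exact Or.inr h
  rcases hA with hA | hA <;> rcases hB with hB | hB
  · -- both extra edges present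
    by_cases hx12 : x1 = x2
    · have hy12 : y1 ≠ y2 := by
        intro h; exact hne (by rw [hx12, h])
      rcases tri G hcomp (hE _ _ h1).2 (hE _ _ h2).2 hy12 with h5 | h5 | h5
      · exact closed_edge G hG h1
          (WB.edge h5 (WB.edge hA.symm (WB.refl x1)))
          (not_mem2 (sym2_ne (fun e _ => h1.ne e) (fun e _ => hx1y2 e))
            (sym2_ne (fun e _ => hx1y2 e) (fun _ e => hy12 e)))
          (nodup2 (sym2_ne (fun e _ => hy12 e) (fun e _ => h1.ne e.symm)))
      · exact closed_edge G hG h1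
          (WB.arc h5 (WB.edge hA.symm (WB.refl x1)))
          (not_mem1 (sym2_ne (fun e _ => hx1y2 e) (fun _ e => hy12 e)))
          (List.nodup_singleton _)
      · exact closed_edge G hG h2
          (WB.arc h5 (WB.edge hB.symm (WB.refl x2)))
          (not_mem1 (sym2_ne (fun e _ => hx2y1 e) (fun _ e => hy12 e.symm)))
          (List.nodup_singleton _)
    · by_cases hy12 : y1 = y2
      · rcases tri G hcomp (hE _ _ h1).1 (hE _ _ h2).1 hx12 with h6 | h6 | h6
        · exact closed_edge G hG h1
            (WB.edge hB.symm (WB.edge h6.symm (WB.refl x1)))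
            (not_mem2 (sym2_ne (fun e _ => h1.ne e) (fun e _ => hx12 e))
              (sym2_ne (fun e _ => hx12 e) (fun _ e => hx2y1 e.symm)))
            (nodup2 (sym2_ne (fun e _ => hx2y1 e.symm) (fun e _ => h1.ne e.symm)))
        · refine closed_edge G hG h2 ?_
            (not_mem1 (sym2_ne (fun e _ => h2.ne e) (fun e _ => hx12 e.symm)))
            (List.nodup_singleton _)
          have : WB G y1 x2 [s(y1, x1)] :=
            WB.edge h1.symm (WB.arc h6 (WB.refl x2))
          rw [hy12] at this
          exact this
        · exact closed_edge G hG h1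
            (WB.edge hB.symm (WB.arc h6 (WB.refl x1)))
            (not_mem1 (sym2_ne (fun e _ => h1.ne e) (fun e _ => hx12 e)))
            (List.nodup_singleton _)
      · exact closed_edge G hG h1
          (WB.edge hB.symm (WB.edge h2 (WB.edge hA.symm (WB.refl x1))))
          (not_mem3 (sym2_ne (fun e _ => h1.ne e) (fun e _ => hx12 e))
            (fun hm => hne hm)
            (sym2_ne (fun e _ => hx1y2 e) (fun _ e => hy12 e)))
          (nodup3 (sym2_ne (fun e _ => hx2y1 e.symm) (fun e _ => hy12 e))
            (sym2_ne (fun e _ => hy12 e) (fun e _ => h1.ne e.symm))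
            (sym2_ne (fun e _ => h2.ne e) (fun e _ => hx12 e.symm)))
  · -- hA edge, hB arc (A y1 x2)
    by_cases hx12 : x1 = x2
    · refine closed_arc G hG (show G.A y1 x1 from hx12 ▸ hB)
        (WB.edge h1 (WB.refl y1)) (List.nodup_singleton _)
    · by_cases hy12 : y1 = y2
      · have hwb : WB G x2 y2 [s(x2, y2)] := WB.edge h2 (WB.refl y2)
        rw [← hy12] at hwb
        exact closed_arc G hG hB hwb (List.nodup_singleton _)
      · exact closed_edge G hG h1
          (WB.arc hB (WB.edge h2 (WB.edge hA.symm (WB.refl x1))))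
          (not_mem2 (fun hm => hne hm)
            (sym2_ne (fun e _ => hx1y2 e) (fun _ e => hy12 e)))
          (nodup2 (sym2_ne (fun e _ => h2.ne e) (fun e _ => hx12 e.symm)))
  · -- hA arc (A y2 x1), hB edge
    by_cases hx12 : x1 = x2
    · exact closed_edge G hG h2
        (WB.arc (show G.A y2 x2 from hx12 ▸ hA) (WB.refl x2))
        List.not_mem_nil List.nodup_nil
    · by_cases hy12 : y1 = y2
      · exact closed_arc G hG (show G.A y1 x1 from by rw [hy12]; exact hA)
          (WB.edge h1 (WB.refl y1)) (List.nodup_singleton _)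
      · exact closed_edge G hG h1
          (WB.edge hB.symm (WB.edge h2 (WB.arc hA (WB.refl x1))))
          (not_mem2 (sym2_ne (fun e _ => h1.ne e) (fun e _ => hx12 e))
            (fun hm => hne hm))
          (nodup2 (sym2_ne (fun e _ => hx2y1 e.symm) (fun e _ => hy12 e)))
  · -- both arcs
    exact closed_edge G hG h1
      (WB.arc hB (WB.edge h2 (WB.arc hA (WB.refl x1))))
      (not_mem1 (fun hm => hne hm)) (List.nodup_singleton _)

lemma oneE_of_singleton {l : List V} {a b : V} {f : Sym2 V}
    (hch : l.Chain' (stepR G)) (hh : l.head? = some a)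
    (hl : l.getLast? = some b) (he : eSeq G l = [f]) :
    ∃ x y, G.E.Adj x y ∧ f = s(x, y) ∧ Relation.ReflTransGen G.A a x ∧
      Relation.ReflTransGen G.A y b := by
  obtain ⟨x, y, P, Q, _, _, _, hQh, hQl, hQch, hE', hf, hR, _, hQe⟩ :=
    D1 G hch hh hl he
  exact ⟨x, y, hE', hf, hR, R_of_eSeq_nil G hQch hQh hQl hQe⟩

lemma dedup : ∀ (n : ℕ) (l : List V) (a b : V), l.length ≤ n →
    l.Chain' (stepR G) → l.head? = some a → l.getLast? = some b →
    ∃ m : List V, m.Chain' (stepR G) ∧ m.Nodup ∧ m.head? = some a ∧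
      m.getLast? = some b := by
  intro n
  induction n with
  | zero =>
    intro l a b hlen hch hh hl
    cases l
    · simp at hh
    · simp at hlen
  | succ n ih =>
    intro l a b hlen hch hh hl
    by_cases hnd : l.Nodup
    · exact ⟨l, hch, hnd, hh, hl⟩
    · have hnd' : ¬ (l.map id).Nodup := by rwa [List.map_id]
      obtain ⟨A, p, B, q, C, hdec, hpq⟩ := exists_dup_map id hnd'
      obtain rfl : p = q := hpq
      have hdec2 : l = A ++ ((p :: B) ++ (p :: C)) := by
        rw [hdec]; simp
      rw [hdec2] at hch hh hl hlen
      obtain ⟨chA, ch2, junc⟩ := List.isChain_append.1 hch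
      obtain ⟨chPB, chPC, _⟩ := List.isChain_append.1 ch2
      apply ih (A ++ p :: C) a b
      · simp only [List.length_append, List.length_cons] at hlen ⊢
        omega
      · refine List.isChain_append.2 ⟨chA, chPC, ?_⟩
        intro u hu v hv
        refine junc u hu v ?_
        rw [List.head?_append_of_ne_nil _ (by simp)]
        simpa using hv
      · rw [List.head?_append] at hh ⊢
        rw [show ((p :: B) ++ (p :: C)).head? = some p from by simp] at hh
        rw [show (p :: C).head? = some p from by simp]
        exact hh
      · rw [List.getLast?_append] at hl ⊢
        rw [List.getLast?_append] at hl
        cases hcl : (p :: C).getLast? with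
        | none => simp at hcl
        | some v =>
          rw [hcl] at hl
          have hvb : v = b := by simpa using hl
          simp [hvb]

lemma lemA (hG : G.MixedAcyclic) {S : Set V}
    (hcomp : ∀ a b : V, a ∉ S → b ∉ S → a ≠ b → G.underlying.Adj a b)
    (hE : ∀ a b : V, G.E.Adj a b → a ∉ S ∧ b ∉ S) {s t : V}
    (hnA : ¬ Relation.ReflTransGen G.A s t) :
    ∀ (n : ℕ) (l : List V), l.length ≤ n → l.Chain' (stepR G) → l.Nodup →
      l.head? = some s → l.getLast? = some t → ∃ f, eSeq G l = [f] := by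
  intro n
  induction n with
  | zero =>
    intro l hlen _ _ hh _
    cases l
    · simp at hh
    · simp at hlen
  | succ n ih =>
    intro l hlen hch hnd hh hl
    rcases he : eSeq G l with _ | ⟨f1, F⟩
    · exact absurd (R_of_eSeq_nil G hch hh hl he) hnA
    rcases F with _ | ⟨f2, F2⟩
    · exact ⟨f1, rfl⟩
    obtain ⟨x1, y1, P1, Q1, hlP, hP1h, hP1l, hQ1h, hQ1l, hQ1ch, h1, hf1,
      hsx1, hP1e, hQ1e⟩ := D1 G hch hh hl he
    obtain ⟨x2, y2, P2, Q2, hQ1eq, hP2h, hP2l, hQ2h, hQ2l, hQ2ch, h2, hf2,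
      hy1x2, hP2e, hQ2e⟩ := D1 G hQ1ch hQ1h hQ1l hQ1e
    have hx1P1 : x1 ∈ P1 := mem_getLast? hP1l
    have hx2P2 : x2 ∈ P2 := mem_getLast? hP2l
    have hy1P2 : y1 ∈ P2 := List.mem_of_mem_head? (by rw [hP2h]; rfl)
    have hy2Q2 : y2 ∈ Q2 := List.mem_of_mem_head? (by rw [hQ2h]; rfl)
    have hndl : (P1 ++ (P2 ++ Q2)).Nodup := by
      rw [hlP, hQ1eq] at hnd; exact hnd
    obtain ⟨ndP1, nd23, disj1⟩ := List.nodup_append'.1 hndl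
    obtain ⟨ndP2, ndQ2, disj2⟩ := List.nodup_append'.1 nd23
    have hx1x2 : x1 ≠ x2 := fun h =>
      disj1 hx1P1 (List.mem_append_left _ (h.symm ▸ hx2P2))
    have hx1y2 : x1 ≠ y2 := fun h =>
      disj1 hx1P1 (List.mem_append_right _ (h.symm ▸ hy2Q2))
    have hy1y2 : y1 ≠ y2 := fun h => disj2 hy1P2 (h.symm ▸ hy2Q2)
    have hnef : f1 ≠ f2 := by
      rw [hf1, hf2]
      exact sym2_ne (fun e _ => hx1x2 e) (fun e _ => hx1y2 e)
    by_cases hEx : G.E.Adj x1 y2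
    · exact (closed_edge G hG h1
        (WB.rtrans hy1x2 (WB.edge h2 (WB.edge hEx.symm (WB.refl x1))))
        (not_mem2 (by rw [← hf1, ← hf2]; exact hnef)
          (sym2_ne (fun e _ => hx1y2 e) (fun _ e => hy1y2 e)))
        (nodup2 (sym2_ne (fun e _ => h2.ne e) (fun e _ => hx1x2 e.symm)))).elim
    rcases tri G hcomp (hE _ _ h1).1 (hE _ _ h2).2 hx1y2 with h' | hxy2 | hy2x1
    · exact absurd h' hEx
    · -- shortcut l' = P1 ++ Q2
      have hP1ne : P1 ≠ [] := fun h => by rw [h] at hP1h; simp at hP1h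
      have hP2ne : P2 ≠ [] := fun h => by rw [h] at hP2h; simp at hP2h
      have hQ2ne : Q2 ≠ [] := fun h => by rw [h] at hQ2h; simp at hQ2h
      have hch' : (P1 ++ Q2).Chain' (stepR G) := by
        have hchl := hch
        rw [hlP] at hchl
        obtain ⟨chP1, _, _⟩ := List.isChain_append.1 hchl
        refine List.isChain_append.2 ⟨chP1, hQ2ch, ?_⟩
        intro u hu v hv
        have hu' : x1 = u := by rw [hP1l] at hu; simpa using hu
        have hv' : y2 = v := by rw [hQ2h] at hv; simpa using hv
        rw [← hu', ← hv']; exact Or.inl hxy2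
      have hnd'' : (P1 ++ Q2).Nodup :=
        hndl.sublist ((List.sublist_append_right P2 Q2).append_left P1)
      have hhd' : (P1 ++ Q2).head? = some s := by
        rw [List.head?_append_of_ne_nil _ hP1ne, hP1h]
      have hlt' : (P1 ++ Q2).getLast? = some t := by
        rw [List.getLast?_append, hQ2l]; rfl
      have hee' : eSeq G (P1 ++ Q2) = F2 := by
        rw [eSeq_append G hP1l hQ2h, hP1e, if_neg hEx, hQ2e]; simp
      have hlen' : (P1 ++ Q2).length ≤ n := by
        have hll : l.length = P1.length + (P2.length + Q2.length) := by
          rw [hlP, hQ1eq]; simp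
        have hP2len : 0 < P2.length := List.length_pos_iff.2 hP2ne
        rw [hll] at hlen
        simp only [List.length_append]
        omega
      obtain ⟨f3, hf3e⟩ := ih (P1 ++ Q2) hlen' hch' hnd'' hhd' hlt'
      rw [hee'] at hf3e
      subst hf3e
      have hend : (eSeq G l).Nodup := eSeq_nodup G hnd
      rw [he] at hend
      have hf1f3 : f1 ≠ f3 := by
        have hnm := (List.nodup_cons.1 hend).1
        intro h; exact hnm (by rw [h]; simp)
      have hf2f3 : f2 ≠ f3 := by
        have hnm := (List.nodup_cons.1 (List.nodup_cons.1 hend).2).1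
        intro h; exact hnm (by rw [h]; simp)
      obtain ⟨x3, y3, P3, Q3, hQ2eq, hP3h, hP3l, hQ3h, hQ3l, hQ3ch, h3, hf3,
        hy2x3, hP3e, hQ3e⟩ := D1 G hQ2ch hQ2h hQ2l hQ2e
      have hx3P3 : x3 ∈ P3 := mem_getLast? hP3l
      have hy3Q3 : y3 ∈ Q3 := List.mem_of_mem_head? (by rw [hQ3h]; rfl)
      have hy2P3 : y2 ∈ P3 := List.mem_of_mem_head? (by rw [hP3h]; rfl)
      have ndQ2' : (P3 ++ Q3).Nodup := by rw [hQ2eq] at ndQ2; exact ndQ2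
      obtain ⟨ndP3, ndQ3, disj3⟩ := List.nodup_append'.1 ndQ2'
      have hx2y3 : x2 ≠ y3 := fun h => disj2 hx2P2
        (by rw [hQ2eq]; exact List.mem_append_right _ (h.symm ▸ hy3Q3))
      have hx2x3 : x2 ≠ x3 := fun h => disj2 hx2P2
        (by rw [hQ2eq]; exact List.mem_append_left _ (h.symm ▸ hx3P3))
      have hy2y3 : y2 ≠ y3 := fun h => disj3 hy2P3 (h.symm ▸ hy3Q3)
      by_cases hEx2 : G.E.Adj x2 y3
      · exact (closed_edge G hG h2
          (WB.rtrans hy2x3 (WB.edge h3 (WB.edge hEx2.symm (WB.refl x2))))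
          (not_mem2 (by rw [← hf2, ← hf3]; exact hf2f3)
            (sym2_ne (fun e _ => hx2y3 e) (fun _ e => hy2y3 e)))
          (nodup2 (sym2_ne (fun e _ => h3.ne e)
            (fun e _ => hx2x3 e.symm)))).elim
      rcases tri G hcomp (hE _ _ h2).1 (hE _ _ h3).2 hx2y3 with
        h' | hxy3 | hy3x2
      · exact absurd h' hEx2
      · -- second shortcut (P1 ++ P2) ++ Q3, then apply `one`
        have hP12l : (P1 ++ P2).getLast? = some x2 := by
          rw [List.getLast?_append, hP2l]; rfl
        have hl2 : l = (P1 ++ P2) ++ (P3 ++ Q3) := by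
          rw [hlP, hQ1eq, hQ2eq]; simp
        have hch12 : (P1 ++ P2).Chain' (stepR G) := by
          have hchl := hch
          rw [hl2] at hchl
          exact (List.isChain_append.1 hchl).1
        have hch'' : ((P1 ++ P2) ++ Q3).Chain' (stepR G) := by
          refine List.isChain_append.2 ⟨hch12, hQ3ch, ?_⟩
          intro u hu v hv
          have hu' : x2 = u := by rw [hP12l] at hu; simpa using hu
          have hv' : y3 = v := by rw [hQ3h] at hv; simpa using hv
          rw [← hu', ← hv']; exact Or.inl hxy3
        have hhd'' : ((P1 ++ P2) ++ Q3).head? = some s := by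
          rw [List.head?_append_of_ne_nil _
              (List.append_ne_nil_of_left_ne_nil hP1ne _),
            List.head?_append_of_ne_nil _ hP1ne, hP1h]
        have hlt'' : ((P1 ++ P2) ++ Q3).getLast? = some t := by
          rw [List.getLast?_append, hQ3l]; rfl
        have hee'' : eSeq G ((P1 ++ P2) ++ Q3) = [f1] := by
          rw [eSeq_append G hP12l hQ3h, eSeq_append G hP1l hP2h, hP1e, hP2e,
            if_pos h1, if_neg hEx2, hQ3e, hf1]
          simp
        obtain ⟨u1, v1, hu1E, hu1f, hRsu1, hRv1t⟩ :=
          oneE_of_singleton G hch'' hhd'' hlt'' hee''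
        obtain ⟨u3, v3, hu3E, hu3f, hRsu3, hRv3t⟩ :=
          oneE_of_singleton G hch' hhd' hlt' hee'
        have hone := one G hG hcomp hE hnA hu1E hRsu1 hRv1t hu3E hRsu3 hRv3t
        rw [← hu1f, ← hu3f] at hone
        exact absurd hone hf1f3
      · exact (closed_edge G hG h2
          (WB.rtrans hy2x3 (WB.edge h3 (WB.arc hy3x2 (WB.refl x2))))
          (not_mem1 (by rw [← hf2, ← hf3]; exact hf2f3))
          (List.nodup_singleton _)).elim
    · exact (closed_edge G hG h1
        (WB.rtrans hy1x2 (WB.edge h2 (WB.arc hy2x1 (WB.refl x1))))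
        (not_mem1 (by rw [← hf1, ← hf2]; exact hnef))
        (List.nodup_singleton _)).elim

end StOr


/-- Let `G` be mixed acyclic, `S ⊆ V` with the underlying graph on
`V ∖ S` complete, and assume every edge of `E` has both endpoints in `V ∖ S`.
Let `D` be the digraph whose arcs are `A` plus both orientations of every edge
of `E`. If `D` contains a directed path from `s` to `t` but `(V, A)` does not,
then there is a single edge `e ∈ E` such that every directed path from `s` to
`t` in `D` traverses exactly one edge of `E` (in one of its two orientations),
and that edge is `e`. -/
theorem steinerOrientation_stmt6 {V : Type*} [Fintype V] (G : MixedGraph V)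
    (hG : G.MixedAcyclic) (S : Set V)
    (hcomp : ∀ a b : V, a ∉ S → b ∉ S → a ≠ b → G.underlying.Adj a b)
    (hE : ∀ a b : V, G.E.Adj a b → a ∉ S ∧ b ∉ S)
    (s t : V)
    (hst : Relation.ReflTransGen (fun a b => G.A a b ∨ G.E.Adj a b) s t)
    (hnA : ¬ Relation.ReflTransGen (fun a b => G.A a b) s t) :
    ∃ e ∈ G.E.edgeSet,
      ∀ l : List V, l.Chain' (fun a b => G.A a b ∨ G.E.Adj a b) → l.Nodup →
        l.head? = some s → l.getLast? = some t →
        (∃! p : V × V, p ∈ l.zip l.tail ∧ s(p.1, p.2) ∈ G.E.edgeSet) ∧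
        (∀ p ∈ l.zip l.tail, s(p.1, p.2) ∈ G.E.edgeSet → s(p.1, p.2) = e) := by
  classical
  open StOr in
  have hnA' : ¬ Relation.ReflTransGen G.A s t := hnA
  obtain ⟨l0, hch0, hlast0⟩ := List.exists_isChain_cons_of_relationReflTransGen hst
  have hch0' : (s :: l0).Chain' (StOr.stepR G) := hch0
  have hlast0' : (s :: l0).getLast? = some t := by
    rw [List.getLast?_eq_getLast (by simp), hlast0]
  obtain ⟨m0, hm0ch, hm0nd, hm0h, hm0l⟩ :=
    StOr.dedup G (s :: l0).length (s :: l0) s t le_rfl hch0' (by simp) hlast0'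
  obtain ⟨e, hee⟩ :=
    StOr.lemA G hG hcomp hE hnA' m0.length m0 le_rfl hm0ch hm0nd hm0h hm0l
  obtain ⟨xe, ye, heE, hef, _, _⟩ :=
    StOr.oneE_of_singleton G hm0ch hm0h hm0l hee
  refine ⟨e, ?_, ?_⟩
  · rw [hef]; exact (SimpleGraph.mem_edgeSet _).2 heE
  intro l hch hnd hh hl
  have hch' : l.Chain' (StOr.stepR G) := hch
  obtain ⟨g, hg⟩ :=
    StOr.lemA G hG hcomp hE hnA' l.length l le_rfl hch' hnd hh hl
  obtain ⟨xg, yg, hgE, hgf, hRs, hRt⟩ :=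
    StOr.oneE_of_singleton G hch' hh hl hg
  obtain ⟨xe2, ye2, heE2, hef2, hRs2, hRt2⟩ :=
    StOr.oneE_of_singleton G hm0ch hm0h hm0l hee
  have hge : g = e := by
    have hone := StOr.one G hG hcomp hE hnA' hgE hRs hRt heE2 hRs2 hRt2
    rw [← hgf, ← hef2] at hone; exact hone
  subst hge
  constructor
  · have hem : g ∈ StOr.eSeq G l := by rw [hg]; simp
    obtain ⟨p, hp, hpE, hps⟩ := StOr.mem_eSeq G hem
    refine ⟨p, ⟨hp, (SimpleGraph.mem_edgeSet _).2 hpE⟩, ?_⟩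
    rintro q ⟨hq, hqE⟩
    have hqE' : G.E.Adj q.1 q.2 := (SimpleGraph.mem_edgeSet _).1 hqE
    have hmm : s(q.1, q.2) ∈ StOr.eSeq G l := StOr.eSeq_mem_intro G hq hqE'
    rw [hg] at hmm
    have hqs : s(q.1, q.2) = g := by simpa using hmm
    exact StOr.zip_pair_eq hnd hq hp (by rw [hqs, ← hps])
  · intro q hq hqE
    have hqE' : G.E.Adj q.1 q.2 := (SimpleGraph.mem_edgeSet _).1 hqE
    have hmm : s(q.1, q.2) ∈ StOr.eSeq G l := StOr.eSeq_mem_intro G hq hqE'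
    rw [hg] at hmm
    simpa using hmm
end

section
/- Let φ be a monotone 3-CNF formula over variables x_1, …, x_n. Then φ is satisfiable if and only if (G(φ), T(φ)) is a yes-instance of Steiner Orientation. -/
/-- Vertices of the graph `G(φ)` built from a monotone 3-CNF formula `φ` with
`n` variables and `m` clauses: the hubs `ℓ`, `r`, the variable vertices
`ℓ_i`, `r_i`, and per-clause vertices `t_j` and `v^j_i`. -/
inductive SOVtx (n m : ℕ) where
  | l : SOVtx n m
  | r : SOVtx n m
  | li (i : Fin n) : SOVtx n m
  | ri (i : Fin n) : SOVtx n m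
  | t (j : Fin m) : SOVtx n m
  | v (j : Fin m) (i : Fin n) : SOVtx n m
  deriving DecidableEq

/-- The undirected edges of `G(φ)`: `{ℓ_i, r_i}` for each variable `x_i`, and
`{v^j_i, t_j}` for each clause `c_j` and each variable `x_i` of `c_j`. -/
def phiE (n m : ℕ) (vars : Fin m → Finset (Fin n)) : SimpleGraph (SOVtx n m) :=
  SimpleGraph.fromRel (fun a b =>
    (∃ i : Fin n, a = SOVtx.li i ∧ b = SOVtx.ri i) ∨
    (∃ (j : Fin m) (i : Fin n), i ∈ vars j ∧ a = SOVtx.v j i ∧ b = SOVtx.t j))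

/-- The arcs of `G(φ)`: `(ℓ_i, ℓ)` and `(r_i, r)` for each variable; for each
positive clause `c_j` (`sign j = true`) the arcs `(ℓ, v^j_i)` and `(r, t_j)`;
for each negative clause `c_j` (`sign j = false`) the arcs `(r, v^j_i)` and
`(ℓ, t_j)`. -/
def phiA (n m : ℕ) (sign : Fin m → Bool) (vars : Fin m → Finset (Fin n)) :
    SOVtx n m → SOVtx n m → Prop := fun a b =>
  (∃ i : Fin n, a = SOVtx.li i ∧ b = SOVtx.l) ∨
  (∃ i : Fin n, a = SOVtx.ri i ∧ b = SOVtx.r) ∨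
  (∃ (j : Fin m) (i : Fin n),
      sign j = true ∧ i ∈ vars j ∧ a = SOVtx.l ∧ b = SOVtx.v j i) ∨
  (∃ j : Fin m, sign j = true ∧ a = SOVtx.r ∧ b = SOVtx.t j) ∨
  (∃ (j : Fin m) (i : Fin n),
      sign j = false ∧ i ∈ vars j ∧ a = SOVtx.r ∧ b = SOVtx.v j i) ∨
  (∃ j : Fin m, sign j = false ∧ a = SOVtx.l ∧ b = SOVtx.t j)

/-- The mixed graph `G(φ)`. -/
def phiG (n m : ℕ) (sign : Fin m → Bool) (vars : Fin m → Finset (Fin n)) :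
    MixedGraph (SOVtx n m) where
  E := phiE n m vars
  A := phiA n m sign vars
  A_irrefl := by
    rintro x (⟨i, rfl, h⟩ | ⟨i, rfl, h⟩ | ⟨j, i, _, _, rfl, h⟩ |
      ⟨j, _, rfl, h⟩ | ⟨j, i, _, _, rfl, h⟩ | ⟨j, _, rfl, h⟩) <;>
      cases h

/-- The terminal pairs `T(φ)`: for each positive clause `c_j` the pairs
`(ℓ, t_j)` and `(r_i, v^j_i)` for the variables `x_i` of `c_j`; for each
negative clause `c_j` the pairs `(r, t_j)` and `(ℓ_i, v^j_i)`. -/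
def phiT (n m : ℕ) (sign : Fin m → Bool) (vars : Fin m → Finset (Fin n)) :
    Set (SOVtx n m × SOVtx n m) :=
  {p | (∃ j : Fin m, sign j = true ∧ p = (SOVtx.l, SOVtx.t j)) ∨
       (∃ (j : Fin m) (i : Fin n),
          sign j = true ∧ i ∈ vars j ∧ p = (SOVtx.ri i, SOVtx.v j i)) ∨
       (∃ j : Fin m, sign j = false ∧ p = (SOVtx.r, SOVtx.t j)) ∨
       (∃ (j : Fin m) (i : Fin n),
          sign j = false ∧ i ∈ vars j ∧ p = (SOVtx.li i, SOVtx.v j i))}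


section SO7

open SOVtx Relation

private lemma SO7.reach_closed {V : Type*} {r : V → V → Prop} {P : V → Prop}
    (hcl : ∀ x y, P x → r x y → P y) {a b : V}
    (h : Relation.ReflTransGen r a b) (ha : P a) : P b := by
  induction h with
  | refl => exact ha
  | tail _ step ih => exact hcl _ _ ih step

private lemma SO7.phiE_adj {n m : ℕ} {vars : Fin m → Finset (Fin n)} {a b : SOVtx n m}
    (h : (phiE n m vars).Adj a b) :
    (∃ i : Fin n, (a = li i ∧ b = ri i) ∨ (a = ri i ∧ b = li i)) ∨
    (∃ (j : Fin m) (i : Fin n), i ∈ vars j ∧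
       ((a = v j i ∧ b = t j) ∨ (a = t j ∧ b = v j i))) := by
  rw [phiE, SimpleGraph.fromRel_adj] at h
  rcases h with ⟨-, (⟨i, rfl, rfl⟩ | ⟨j, i, hij, rfl, rfl⟩) |
    (⟨i, rfl, rfl⟩ | ⟨j, i, hij, rfl, rfl⟩)⟩
  · exact Or.inl ⟨i, Or.inl ⟨rfl, rfl⟩⟩
  · exact Or.inr ⟨j, i, hij, Or.inl ⟨rfl, rfl⟩⟩
  · exact Or.inl ⟨i, Or.inr ⟨rfl, rfl⟩⟩
  · exact Or.inr ⟨j, i, hij, Or.inr ⟨rfl, rfl⟩⟩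

/-- The orientation of `G(φ)` induced by an assignment `α`. -/
private def SO7.lam (n m : ℕ) (sign : Fin m → Bool) (vars : Fin m → Finset (Fin n))
    (α : Fin n → Bool) : (phiG n m sign vars).Orientation where
  dir a b :=
    (∃ i, α i = true ∧ a = ri i ∧ b = li i) ∨
    (∃ i, α i = false ∧ a = li i ∧ b = ri i) ∨
    (∃ j i, i ∈ vars j ∧ α i = sign j ∧ a = v j i ∧ b = t j) ∨
    (∃ j i, i ∈ vars j ∧ α i ≠ sign j ∧ a = t j ∧ b = v j i)
  dir_adj := by
    rintro a b (⟨i, hb, rfl, rfl⟩ | ⟨i, hb, rfl, rfl⟩ |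
      ⟨j, i, hij, hb, rfl, rfl⟩ | ⟨j, i, hij, hb, rfl, rfl⟩) <;>
      refine (SimpleGraph.fromRel_adj _ _ _).mpr ⟨by simp, ?_⟩
    · exact Or.inr (Or.inl ⟨i, rfl, rfl⟩)
    · exact Or.inl (Or.inl ⟨i, rfl, rfl⟩)
    · exact Or.inl (Or.inr ⟨j, i, hij, rfl, rfl⟩)
    · exact Or.inr (Or.inr ⟨j, i, hij, rfl, rfl⟩)
  total := by
    intro u v h
    rcases SO7.phiE_adj h with ⟨i, ⟨rfl, rfl⟩ | ⟨rfl, rfl⟩⟩ |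
      ⟨j, i, hij, ⟨rfl, rfl⟩ | ⟨rfl, rfl⟩⟩
    · cases hb : α i
      · exact Or.inl (Or.inr (Or.inl ⟨i, hb, rfl, rfl⟩))
      · exact Or.inr (Or.inl ⟨i, hb, rfl, rfl⟩)
    · cases hb : α i
      · exact Or.inr (Or.inr (Or.inl ⟨i, hb, rfl, rfl⟩))
      · exact Or.inl (Or.inl ⟨i, hb, rfl, rfl⟩)
    · by_cases hb : α i = sign j
      · exact Or.inl (Or.inr (Or.inr (Or.inl ⟨j, i, hij, hb, rfl, rfl⟩)))
      · exact Or.inr (Or.inr (Or.inr (Or.inr ⟨j, i, hij, hb, rfl, rfl⟩)))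
    · by_cases hb : α i = sign j
      · exact Or.inr (Or.inr (Or.inr (Or.inl ⟨j, i, hij, hb, rfl, rfl⟩)))
      · exact Or.inl (Or.inr (Or.inr (Or.inr ⟨j, i, hij, hb, rfl, rfl⟩)))
  antisymm := by
    rintro a b (⟨i, hb, rfl, rfl⟩ | ⟨i, hb, rfl, rfl⟩ |
        ⟨j, i, hij, hb, rfl, rfl⟩ | ⟨j, i, hij, hb, rfl, rfl⟩) <;>
      rintro (⟨i', hb', h1, h2⟩ | ⟨i', hb', h1, h2⟩ |
        ⟨j', i', hij', hb', h1, h2⟩ | ⟨j', i', hij', hb', h1, h2⟩) <;>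
      simp_all

private lemma SO7.not_reach_lr {n m : ℕ} {sign : Fin m → Bool}
    {vars : Fin m → Finset (Fin n)} (lam : (phiG n m sign vars).Orientation)
    (h : Relation.ReflTransGen lam.arc SOVtx.l SOVtx.r) : False := by
  have key := SO7.reach_closed (P := fun x => match x with
    | SOVtx.l => True | SOVtx.t _ => True | SOVtx.v _ _ => True | _ => False)
    ?_ h trivial
  · exact key
  · rintro x y hx (hA | hd)
    · rcases hA with ⟨i', rfl, rfl⟩ | ⟨i', rfl, rfl⟩ | ⟨j', i', hs', hij', rfl, rfl⟩ |
        ⟨j', hs', rfl, rfl⟩ | ⟨j', i', hs', hij', rfl, rfl⟩ | ⟨j', hs', rfl, rfl⟩ <;>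
        first | exact hx.elim | exact trivial
    · rcases SO7.phiE_adj (lam.dir_adj _ _ hd) with ⟨i', ⟨rfl, rfl⟩ | ⟨rfl, rfl⟩⟩ |
        ⟨j', i', hij', ⟨rfl, rfl⟩ | ⟨rfl, rfl⟩⟩ <;>
        first | exact hx.elim | exact trivial

private lemma SO7.not_reach_rl {n m : ℕ} {sign : Fin m → Bool}
    {vars : Fin m → Finset (Fin n)} (lam : (phiG n m sign vars).Orientation)
    (h : Relation.ReflTransGen lam.arc SOVtx.r SOVtx.l) : False := by
  have key := SO7.reach_closed (P := fun x => match x with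
    | SOVtx.r => True | SOVtx.t _ => True | SOVtx.v _ _ => True | _ => False)
    ?_ h trivial
  · exact key
  · rintro x y hx (hA | hd)
    · rcases hA with ⟨i', rfl, rfl⟩ | ⟨i', rfl, rfl⟩ | ⟨j', i', hs', hij', rfl, rfl⟩ |
        ⟨j', hs', rfl, rfl⟩ | ⟨j', i', hs', hij', rfl, rfl⟩ | ⟨j', hs', rfl, rfl⟩ <;>
        first | exact hx.elim | exact trivial
    · rcases SO7.phiE_adj (lam.dir_adj _ _ hd) with ⟨i', ⟨rfl, rfl⟩ | ⟨rfl, rfl⟩⟩ |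
        ⟨j', i', hij', ⟨rfl, rfl⟩ | ⟨rfl, rfl⟩⟩ <;>
        first | exact hx.elim | exact trivial

private lemma SO7.pos_force {n m : ℕ} {sign : Fin m → Bool}
    {vars : Fin m → Finset (Fin n)} (lam : (phiG n m sign vars).Orientation)
    {j : Fin m} {i : Fin n} (hs : sign j = true)
    (hd : lam.dir (SOVtx.v j i) (SOVtx.t j))
    (h : Relation.ReflTransGen lam.arc (SOVtx.ri i) (SOVtx.v j i)) :
    lam.dir (SOVtx.ri i) (SOVtx.li i) := by
  by_contra hnd
  have key := SO7.reach_closed (P := fun x => match x with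
    | SOVtx.r => True | SOVtx.t _ => True
    | SOVtx.ri i' => i' = i
    | SOVtx.v j' i' => ¬ (j' = j ∧ i' = i)
    | _ => False) ?_ h rfl
  · exact key ⟨rfl, rfl⟩
  · rintro x y hx (hA | hdxy)
    · rcases hA with ⟨i', rfl, rfl⟩ | ⟨i', rfl, rfl⟩ | ⟨j', i', hs', hij', rfl, rfl⟩ |
        ⟨j', hs', rfl, rfl⟩ | ⟨j', i', hs', hij', rfl, rfl⟩ | ⟨j', hs', rfl, rfl⟩
      · exact hx.elim
      · exact trivial
      · exact hx.elim
      · exact trivial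
      · rintro ⟨rfl, rfl⟩
        rw [hs] at hs'
        exact Bool.noConfusion hs'
      · exact trivial
    · rcases SO7.phiE_adj (lam.dir_adj _ _ hdxy) with ⟨i', ⟨rfl, rfl⟩ | ⟨rfl, rfl⟩⟩ |
        ⟨j', i', hij', ⟨rfl, rfl⟩ | ⟨rfl, rfl⟩⟩
      · exact hx.elim
      · have hii : i' = i := hx
        subst hii
        exact (hnd hdxy).elim
      · exact trivial
      · rintro ⟨rfl, rfl⟩
        exact lam.antisymm _ _ hd hdxy

private lemma SO7.neg_force {n m : ℕ} {sign : Fin m → Bool}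
    {vars : Fin m → Finset (Fin n)} (lam : (phiG n m sign vars).Orientation)
    {j : Fin m} {i : Fin n} (hs : sign j = false)
    (hd : lam.dir (SOVtx.v j i) (SOVtx.t j))
    (h : Relation.ReflTransGen lam.arc (SOVtx.li i) (SOVtx.v j i)) :
    lam.dir (SOVtx.li i) (SOVtx.ri i) := by
  by_contra hnd
  have key := SO7.reach_closed (P := fun x => match x with
    | SOVtx.l => True | SOVtx.t _ => True
    | SOVtx.li i' => i' = i
    | SOVtx.v j' i' => ¬ (j' = j ∧ i' = i)
    | _ => False) ?_ h rfl
  · exact key ⟨rfl, rfl⟩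
  · rintro x y hx (hA | hdxy)
    · rcases hA with ⟨i', rfl, rfl⟩ | ⟨i', rfl, rfl⟩ | ⟨j', i', hs', hij', rfl, rfl⟩ |
        ⟨j', hs', rfl, rfl⟩ | ⟨j', i', hs', hij', rfl, rfl⟩ | ⟨j', hs', rfl, rfl⟩
      · exact trivial
      · exact hx.elim
      · rintro ⟨rfl, rfl⟩
        rw [hs] at hs'
        exact Bool.noConfusion hs'
      · exact hx.elim
      · exact hx.elim
      · exact trivial
    · rcases SO7.phiE_adj (lam.dir_adj _ _ hdxy) with ⟨i', ⟨rfl, rfl⟩ | ⟨rfl, rfl⟩⟩ |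
        ⟨j', i', hij', ⟨rfl, rfl⟩ | ⟨rfl, rfl⟩⟩
      · have hii : i' = i := hx
        subst hii
        exact (hnd hdxy).elim
      · exact hx.elim
      · exact trivial
      · rintro ⟨rfl, rfl⟩
        exact lam.antisymm _ _ hd hdxy

end SO7

/-- A monotone 3-CNF formula `φ` (clause `j` is positive iff
`sign j = true`, its variables are `vars j`, a nonempty set of at most 3
variables) is satisfiable iff `(G(φ), T(φ))` is a yes-instance of
Steiner Orientation. -/
theorem steinerOrientation_stmt7 (n m : ℕ) (sign : Fin m → Bool)
    (vars : Fin m → Finset (Fin n))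
    (hvars : ∀ j, (vars j).Nonempty ∧ (vars j).card ≤ 3) :
    (∃ α : Fin n → Bool, ∀ j, ∃ i ∈ vars j, α i = sign j) ↔
      (phiG n m sign vars).YesInstance (phiT n m sign vars) := by
  classical
  constructor
  · rintro ⟨α, hα⟩
    refine ⟨SO7.lam n m sign vars α, ?_⟩
    rintro ⟨a, b⟩ hp
    rcases hp with ⟨j, hsj, hpe⟩ | ⟨j, i, hsj, hij, hpe⟩ | ⟨j, hsj, hpe⟩ |
      ⟨j, i, hsj, hij, hpe⟩ <;> injection hpe with h1 h2 <;> subst h1 <;> subst h2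
    · -- pair (l, t j), positive clause
      obtain ⟨i, hij, hαi⟩ := hα j
      have s1 : (SO7.lam n m sign vars α).arc SOVtx.l (SOVtx.v j i) :=
        Or.inl (Or.inr (Or.inr (Or.inl ⟨j, i, hsj, hij, rfl, rfl⟩)))
      have s2 : (SO7.lam n m sign vars α).arc (SOVtx.v j i) (SOVtx.t j) :=
        Or.inr (Or.inr (Or.inr (Or.inl ⟨j, i, hij, hαi, rfl, rfl⟩)))
      exact Relation.ReflTransGen.head s1
        (Relation.ReflTransGen.head s2 Relation.ReflTransGen.refl)
    · -- pair (ri i, v j i), positive clause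
      by_cases hb : α i = sign j
      · have s1 : (SO7.lam n m sign vars α).arc (SOVtx.ri i) (SOVtx.li i) :=
          Or.inr (Or.inl ⟨i, hb.trans hsj, rfl, rfl⟩)
        have s2 : (SO7.lam n m sign vars α).arc (SOVtx.li i) SOVtx.l :=
          Or.inl (Or.inl ⟨i, rfl, rfl⟩)
        have s3 : (SO7.lam n m sign vars α).arc SOVtx.l (SOVtx.v j i) :=
          Or.inl (Or.inr (Or.inr (Or.inl ⟨j, i, hsj, hij, rfl, rfl⟩)))
        exact Relation.ReflTransGen.head s1 (Relation.ReflTransGen.head s2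
          (Relation.ReflTransGen.head s3 Relation.ReflTransGen.refl))
      · have s1 : (SO7.lam n m sign vars α).arc (SOVtx.ri i) SOVtx.r :=
          Or.inl (Or.inr (Or.inl ⟨i, rfl, rfl⟩))
        have s2 : (SO7.lam n m sign vars α).arc SOVtx.r (SOVtx.t j) :=
          Or.inl (Or.inr (Or.inr (Or.inr (Or.inl ⟨j, hsj, rfl, rfl⟩))))
        have s3 : (SO7.lam n m sign vars α).arc (SOVtx.t j) (SOVtx.v j i) :=
          Or.inr (Or.inr (Or.inr (Or.inr ⟨j, i, hij, hb, rfl, rfl⟩)))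
        exact Relation.ReflTransGen.head s1 (Relation.ReflTransGen.head s2
          (Relation.ReflTransGen.head s3 Relation.ReflTransGen.refl))
    · -- pair (r, t j), negative clause
      obtain ⟨i, hij, hαi⟩ := hα j
      have s1 : (SO7.lam n m sign vars α).arc SOVtx.r (SOVtx.v j i) :=
        Or.inl (Or.inr (Or.inr (Or.inr (Or.inr (Or.inl ⟨j, i, hsj, hij, rfl, rfl⟩)))))
      have s2 : (SO7.lam n m sign vars α).arc (SOVtx.v j i) (SOVtx.t j) :=
        Or.inr (Or.inr (Or.inr (Or.inl ⟨j, i, hij, hαi, rfl, rfl⟩)))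
      exact Relation.ReflTransGen.head s1
        (Relation.ReflTransGen.head s2 Relation.ReflTransGen.refl)
    · -- pair (li i, v j i), negative clause
      by_cases hb : α i = sign j
      · have s1 : (SO7.lam n m sign vars α).arc (SOVtx.li i) (SOVtx.ri i) :=
          Or.inr (Or.inr (Or.inl ⟨i, hb.trans hsj, rfl, rfl⟩))
        have s2 : (SO7.lam n m sign vars α).arc (SOVtx.ri i) SOVtx.r :=
          Or.inl (Or.inr (Or.inl ⟨i, rfl, rfl⟩))
        have s3 : (SO7.lam n m sign vars α).arc SOVtx.r (SOVtx.v j i) :=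
          Or.inl (Or.inr (Or.inr (Or.inr (Or.inr (Or.inl ⟨j, i, hsj, hij, rfl, rfl⟩)))))
        exact Relation.ReflTransGen.head s1 (Relation.ReflTransGen.head s2
          (Relation.ReflTransGen.head s3 Relation.ReflTransGen.refl))
      · have s1 : (SO7.lam n m sign vars α).arc (SOVtx.li i) SOVtx.l :=
          Or.inl (Or.inl ⟨i, rfl, rfl⟩)
        have s2 : (SO7.lam n m sign vars α).arc SOVtx.l (SOVtx.t j) :=
          Or.inl (Or.inr (Or.inr (Or.inr (Or.inr (Or.inr ⟨j, hsj, rfl, rfl⟩)))))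
        have s3 : (SO7.lam n m sign vars α).arc (SOVtx.t j) (SOVtx.v j i) :=
          Or.inr (Or.inr (Or.inr (Or.inr ⟨j, i, hij, hb, rfl, rfl⟩)))
        exact Relation.ReflTransGen.head s1 (Relation.ReflTransGen.head s2
          (Relation.ReflTransGen.head s3 Relation.ReflTransGen.refl))
  · rintro ⟨lam, hsat⟩
    refine ⟨fun i => if lam.dir (SOVtx.ri i) (SOVtx.li i) then true else false,
      fun j => ?_⟩
    by_cases hs : sign j = true
    · have hreach := hsat _ (Or.inl ⟨j, hs, rfl⟩)
      rcases Relation.ReflTransGen.cases_tail hreach with heq | ⟨c, hc, hstep⟩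
      · cases heq
      rcases hstep with hA | hd
      · rcases hA with ⟨i', rfl, hb⟩ | ⟨i', rfl, hb⟩ | ⟨j', i', hs', hij', rfl, hb⟩ |
          ⟨j', hs', rfl, hb⟩ | ⟨j', i', hs', hij', rfl, hb⟩ | ⟨j', hs', rfl, hb⟩
        · cases hb
        · cases hb
        · cases hb
        · exact (SO7.not_reach_lr lam hc).elim
        · cases hb
        · injection hb with hj
          subst hj
          rw [hs] at hs'
          exact Bool.noConfusion hs'
      · rcases SO7.phiE_adj (lam.dir_adj _ _ hd) with ⟨i', ⟨rfl, hb⟩ | ⟨rfl, hb⟩⟩ |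
          ⟨j', i', hij', ⟨rfl, hb⟩ | ⟨rfl, hb⟩⟩
        · cases hb
        · cases hb
        · injection hb with hj
          subst hj
          refine ⟨i', hij', ?_⟩
          have hd2 := SO7.pos_force lam hs hd
            (hsat _ (Or.inr (Or.inl ⟨j, i', hs, hij', rfl⟩)))
          simp only [if_pos hd2, hs]
        · cases hb
    · have hs' : sign j = false := Bool.not_eq_true _ ▸ hs
      have hreach := hsat _ (Or.inr (Or.inr (Or.inl ⟨j, hs', rfl⟩)))
      rcases Relation.ReflTransGen.cases_tail hreach with heq | ⟨c, hc, hstep⟩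
      · cases heq
      rcases hstep with hA | hd
      · rcases hA with ⟨i', rfl, hb⟩ | ⟨i', rfl, hb⟩ | ⟨j', i', hs2, hij', rfl, hb⟩ |
          ⟨j', hs2, rfl, hb⟩ | ⟨j', i', hs2, hij', rfl, hb⟩ | ⟨j', hs2, rfl, hb⟩
        · cases hb
        · cases hb
        · cases hb
        · injection hb with hj
          subst hj
          rw [hs'] at hs2
          exact Bool.noConfusion hs2
        · cases hb
        · exact (SO7.not_reach_rl lam hc).elim
      · rcases SO7.phiE_adj (lam.dir_adj _ _ hd) with ⟨i', ⟨rfl, hb⟩ | ⟨rfl, hb⟩⟩ |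
          ⟨j', i', hij', ⟨rfl, hb⟩ | ⟨rfl, hb⟩⟩
        · cases hb
        · cases hb
        · injection hb with hj
          subst hj
          refine ⟨i', hij', ?_⟩
          have hd2 := SO7.neg_force lam hs' hd
            (hsat _ (Or.inr (Or.inr (Or.inr ⟨j, i', hs', hij', rfl⟩))))
          simp only [if_neg (lam.antisymm _ _ hd2), hs']
        · cases hb
end
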